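/- Over a polymatroid with rank function f on {1,…,M}, the corner point that maximizes the minimum component among all corner points is the one obtained by ordering users so that rates increase from bottom to top; in particular for M=2 with f symmetric in the sense f({1}) ≤ f({2}), the corner point (f({1}), f({1,2})−f({1})) maximizes min(r₁,r₂) over all points of the polymatroid whenever f({1}) ≤ f({1,2})−f({1}). -/

import Mathlib

open Finset

/-- Submodularity of a set function. -/
def Submodular {M : ℕ} (f : Finset (Fin M) → ℝ) : Prop :=
  ∀ S T : Finset (Fin M), f (S ∪ T) + f (S ∩ T) ≤ f S + f T

/-- Membership in the polymatroid with rank function `f`. -/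
def InPoly {M : ℕ} (f : Finset (Fin M) → ℝ) (r : Fin M → ℝ) : Prop :=
  (∀ i, 0 ≤ r i) ∧ ∀ S : Finset (Fin M), ∑ i ∈ S, r i ≤ f S

/-- Max-min fairness at a corner point, `M = 2`: if `f {0} ≤ f univ - f {0}` then the corner
point `(f {0}, f univ - f {0})` lies in the polymatroid, its minimum component is `f {0}`,
and every point of the polymatroid has minimum component at most `f {0}`; i.e. this corner
point maximizes `min r₁ r₂`. -/
theorem stmt9 (f : Finset (Fin 2) → ℝ)
    (h0 : f ∅ = 0) (hmono : ∀ S T, S ⊆ T → f S ≤ f T) (hsub : Submodular f)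
    (hbal : f {0} ≤ f Finset.univ - f {0}) :
    InPoly f (fun i => if i = 0 then f {0} else f Finset.univ - f {0}) ∧
    min (f {0}) (f Finset.univ - f {0}) = f {0} ∧
    ∀ r : Fin 2 → ℝ, InPoly f r → min (r 0) (r 1) ≤ f {0} := by
  have h0nn : (0:ℝ) ≤ f {0} := by
    have := hmono ∅ {0} (by simp)
    linarith [this, h0]
  have hsum : f Finset.univ ≤ f {0} + f {1} := by
    have := hsub {0} {1}
    have hu : ({0} : Finset (Fin 2)) ∪ {1} = Finset.univ := by decide
    have hi : ({0} : Finset (Fin 2)) ∩ {1} = ∅ := by decide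
    rw [hu, hi, h0] at this
    linarith
  refine ⟨⟨?_, ?_⟩, min_eq_left hbal, ?_⟩
  · intro i
    fin_cases i <;> simp <;> linarith
  · intro S
    have hc : ∀ T : Finset (Fin 2), T = ∅ ∨ T = {0} ∨ T = {1} ∨ T = Finset.univ := by decide
    rcases hc S with h | h | h | h <;> subst h <;>
      simp [h0, Fin.sum_univ_two] <;> linarith
  · intro r ⟨hnn, hr⟩
    have := hr {0}
    simp at this
    exact le_trans (min_le_left _ _) this
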